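/- Let (v_t), (r_t), (η_t) be sequences in ℝ^m with v_{-1} = η_{-1}, v_t = (1 - α_t) v_{t-1} + α_t r_t where α_t ∈ [ε, 1] with ε > 0, and suppose Σ_{t=0}^T ‖r_t - η_{t-1}‖ ≤ (κ/(1-κ)) Σ_{t=0}^T ‖η_t - η_{t-1}‖ for κ ∈ [0,1). Then Σ_{t=0}^T ‖v_t - η_t‖ ≤ (1/(ε(1-κ))) Σ_{t=0}^T ‖η_t - η_{t-1}‖. -/
import Mathlib


/-- If `v_{-1} = η_{-1}`, `v_t = (1-α_t) v_{t-1} + α_t r_t` with `α_t ∈ [ε,1]`, `ε > 0`,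
and `Σ_{t=0}^T ‖r_t - η_{t-1}‖ ≤ (κ/(1-κ)) Σ_{t=0}^T ‖η_t - η_{t-1}‖` with `κ ∈ [0,1)`,
then `Σ_{t=0}^T ‖v_t - η_t‖ ≤ (1/(ε(1-κ))) Σ_{t=0}^T ‖η_t - η_{t-1}‖`. -/
theorem stmt8 {m : ℕ} (v r η : ℤ → EuclideanSpace ℝ (Fin m)) (α : ℤ → ℝ)
    (ε κ : ℝ) (hε : 0 < ε) (hκ : κ ∈ Set.Ico (0 : ℝ) 1)
    (hinit : v (-1) = η (-1))
    (hα : ∀ t : ℕ, α t ∈ Set.Icc ε 1)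
    (hupd : ∀ t : ℕ, v t = (1 - α t) • v (t - 1) + α t • r t)
    (T : ℕ)
    (hr : ∑ t ∈ Finset.range (T + 1), ‖r t - η ((t : ℤ) - 1)‖
      ≤ κ / (1 - κ) * ∑ t ∈ Finset.range (T + 1), ‖η t - η ((t : ℤ) - 1)‖) :
    ∑ t ∈ Finset.range (T + 1), ‖v t - η t‖
      ≤ 1 / (ε * (1 - κ)) * ∑ t ∈ Finset.range (T + 1), ‖η t - η ((t : ℤ) - 1)‖ := by
  obtain ⟨hκ0, hκ1⟩ := hκ
  have hκ1' : 0 < 1 - κ := by linarith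
  have hε1 : ε ≤ 1 := le_trans (hα 0).1 (hα 0).2
  set S := ∑ t ∈ Finset.range (T + 1), ‖v t - η t‖ with hS
  set D := ∑ t ∈ Finset.range (T + 1), ‖η t - η ((t : ℤ) - 1)‖ with hD
  set R := ∑ t ∈ Finset.range (T + 1), ‖r t - η ((t : ℤ) - 1)‖ with hR
  have hDnn : 0 ≤ D := Finset.sum_nonneg fun _ _ => norm_nonneg _
  have hSnn : 0 ≤ S := Finset.sum_nonneg fun _ _ => norm_nonneg _
  -- pointwise bound
  have key : ∀ t : ℕ, ‖v t - η t‖ ≤ (1 - ε) * ‖v ((t : ℤ) - 1) - η ((t : ℤ) - 1)‖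
      + ‖r t - η ((t : ℤ) - 1)‖ + ‖η t - η ((t : ℤ) - 1)‖ := by
    intro t
    obtain ⟨h1, h2⟩ := hα t
    have hid : v t - η t = (1 - α t) • (v ((t : ℤ) - 1) - η ((t : ℤ) - 1))
        + (α t) • (r t - η ((t : ℤ) - 1)) + (η ((t : ℤ) - 1) - η t) := by
      rw [hupd t]; module
    calc ‖v t - η t‖ = ‖(1 - α t) • (v ((t : ℤ) - 1) - η ((t : ℤ) - 1))
          + (α t) • (r t - η ((t : ℤ) - 1)) + (η ((t : ℤ) - 1) - η t)‖ := by rw [hid]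
      _ ≤ ‖(1 - α t) • (v ((t : ℤ) - 1) - η ((t : ℤ) - 1))‖
          + ‖(α t) • (r t - η ((t : ℤ) - 1))‖ + ‖η ((t : ℤ) - 1) - η t‖ := norm_add₃_le
      _ = (1 - α t) * ‖v ((t : ℤ) - 1) - η ((t : ℤ) - 1)‖
          + (α t) * ‖r t - η ((t : ℤ) - 1)‖ + ‖η t - η ((t : ℤ) - 1)‖ := by
            rw [norm_smul, norm_smul, Real.norm_eq_abs, Real.norm_eq_abs,
              abs_of_nonneg (by linarith), abs_of_nonneg (by linarith),
              norm_sub_rev (η ((t : ℤ) - 1)) (η t)]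
      _ ≤ (1 - ε) * ‖v ((t : ℤ) - 1) - η ((t : ℤ) - 1)‖
          + ‖r t - η ((t : ℤ) - 1)‖ + ‖η t - η ((t : ℤ) - 1)‖ := by
            have := norm_nonneg (v ((t : ℤ) - 1) - η ((t : ℤ) - 1))
            have := norm_nonneg (r t - η ((t : ℤ) - 1))
            nlinarith
  -- shifted sum
  have hshift : ∑ t ∈ Finset.range (T + 1), ‖v ((t : ℤ) - 1) - η ((t : ℤ) - 1)‖
      = ∑ t ∈ Finset.range T, ‖v t - η t‖ := by
    rw [Finset.sum_range_succ']
    have h0 : ‖v ((0 : ℕ) - 1 : ℤ) - η ((0 : ℕ) - 1 : ℤ)‖ = 0 := by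
      norm_num [hinit]
    rw [h0, add_zero]
    apply Finset.sum_congr rfl
    intro i _
    congr 2 <;> push_cast <;> ring_nf
  have hshift_le : ∑ t ∈ Finset.range (T + 1), ‖v ((t : ℤ) - 1) - η ((t : ℤ) - 1)‖ ≤ S := by
    rw [hshift, hS]
    exact Finset.sum_le_sum_of_subset_of_nonneg
      (Finset.range_subset_range.2 (Nat.le_succ T)) (fun _ _ _ => norm_nonneg _)
  have hsum : S ≤ (1 - ε) * (∑ t ∈ Finset.range (T + 1), ‖v ((t : ℤ) - 1) - η ((t : ℤ) - 1)‖)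
      + R + D := by
    rw [hS, hR, hD, Finset.mul_sum, ← Finset.sum_add_distrib, ← Finset.sum_add_distrib]
    exact Finset.sum_le_sum fun t _ => key t
  have h1 : S ≤ (1 - ε) * S + R + D := by
    have := mul_le_mul_of_nonneg_left hshift_le (by linarith : (0:ℝ) ≤ 1 - ε)
    linarith
  have h2 : ε * S ≤ 1 / (1 - κ) * D := by
    have hRD : R ≤ κ / (1 - κ) * D := hr
    have : κ / (1 - κ) * D + D = 1 / (1 - κ) * D := by
      field_simp; ring
    linarith
  rw [div_mul_eq_mul_div, one_mul, le_div_iff₀ (by positivity)]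
  have := mul_le_mul_of_nonneg_right h2 hκ1'.le
  have hrw : 1 / (1 - κ) * D * (1 - κ) = D := by field_simp
  nlinarith
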